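/- Let Ω be a set with a Boolean algebra M of subsets and let Pr(M) be the set of finitely additive probability measures on M. Suppose A, B ∈ M with ∅ ⊊ B ⊊ A ⊊ Ω. Then there is no element C ∈ M such that for every probability π ∈ Pr(M) with 0 < π(B) < π(A) < 1 one has π(C) = π(A ∩ B)/π(A). -/
import Mathlib


/-- A finitely additive probability measure on a Boolean algebra `M` of subsets of `Ω`. -/
def IsFinAddProb {Ω : Type*} (M : Set (Set Ω)) (π : Set Ω → ℝ) : Prop :=
  (∀ X ∈ M, 0 ≤ π X) ∧ π (∅ : Set Ω) = 0 ∧ π (Set.univ : Set Ω) = 1 ∧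
    ∀ X ∈ M, ∀ Y ∈ M, X ∩ Y = ∅ → π (X ∪ Y) = π X + π Y

/-- Lewis' triviality: there is no proposition `C ∈ M` whose probability is always the
conditional probability `π(A ∩ B)/π(A)`. -/
theorem lewis_triviality {Ω : Type*} [Fintype Ω] (M : Set (Set Ω))
    (hM_empty : (∅ : Set Ω) ∈ M) (hM_univ : (Set.univ : Set Ω) ∈ M)
    (hM_inter : ∀ X ∈ M, ∀ Y ∈ M, X ∩ Y ∈ M) (hM_compl : ∀ X ∈ M, Xᶜ ∈ M)
    (A B : Set Ω) (hA : A ∈ M) (hB : B ∈ M)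
    (hB_ne : B ≠ ∅) (hBA : B ⊂ A) (hAW : A ⊂ Set.univ) :
    ¬ ∃ C ∈ M, ∀ π : Set Ω → ℝ, IsFinAddProb M π →
      0 < π B → π B < π A → π A < 1 → π C = π (A ∩ B) / π A := by
  classical
  rintro ⟨C, hC, hprop⟩
  obtain ⟨b, hb⟩ := Set.nonempty_iff_ne_empty.mpr hB_ne
  obtain ⟨hBsub, hne1⟩ := hBA
  obtain ⟨a, haA, haB⟩ := Set.not_subset.mp hne1
  obtain ⟨hAsub, hne2⟩ := hAW
  obtain ⟨w, _, hwA⟩ := Set.not_subset.mp hne2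
  set g : Ω → ℝ := fun _ => 1 with hg
  set f : Set Ω → ℝ := fun X =>
    (X.indicator g b + X.indicator g a + X.indicator g w) / 3 with hf
  have hzo : ∀ (X : Set Ω) (t : Ω), X.indicator g t = 0 ∨ X.indicator g t = 1 := by
    intro X t
    by_cases h : t ∈ X
    · right; simp [Set.indicator_of_mem h, hg]
    · left; simp [Set.indicator_of_notMem h]
  have hprob : IsFinAddProb M f := by
    refine ⟨fun X _ => ?_, ?_, ?_, fun X _ Y _ hXY => ?_⟩
    · have h1 := hzo X b; have h2 := hzo X a; have h3 := hzo X w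
      simp only [hf]
      rcases h1 with h1 | h1 <;> rcases h2 with h2 | h2 <;> rcases h3 with h3 | h3 <;>
        rw [h1, h2, h3] <;> norm_num
    · simp [hf]
    · simp [hf, hg]; norm_num
    · have hdisj : Disjoint X Y := Set.disjoint_iff_inter_eq_empty.mpr hXY
      have hu := Set.indicator_union_of_disjoint hdisj g
      simp only [hf, hu]
      ring
  have hbA : b ∈ A := hBsub hb
  have hwB : w ∉ B := fun h => hwA (hBsub h)
  have hfB : f B = 1 / 3 := by
    simp [hf, Set.indicator_of_mem hb, Set.indicator_of_notMem haB,
      Set.indicator_of_notMem hwB, hg]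
  have hfA : f A = 2 / 3 := by
    simp [hf, Set.indicator_of_mem hbA, Set.indicator_of_mem haA,
      Set.indicator_of_notMem hwA, hg]
    norm_num
  have hAB : A ∩ B = B := Set.inter_eq_right.mpr hBsub
  have key := hprop f hprob (by rw [hfB]; norm_num) (by rw [hfB, hfA]; norm_num)
    (by rw [hfA]; norm_num)
  rw [hAB, hfB, hfA] at key
  have h1 := hzo C b; have h2 := hzo C a; have h3 := hzo C w
  simp only [hf] at key
  rcases h1 with h1 | h1 <;> rcases h2 with h2 | h2 <;> rcases h3 with h3 | h3 <;>
    rw [h1, h2, h3] at key <;> norm_num at key
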